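/- Let μ be a δ-dimensional Γ-invariant conformal density with δ > 0, and suppose η ∈ ∂X is a point mass for μ (i.e., μ_o({η}) > 0). Then for every x ∈ X and every γ in the stabilizer Γ_η of η in Γ, one has B_η(x, γx) = 0. -/

import Mathlib

open MeasureTheory

/-- Let `μ` be a `δ`-dimensional `Γ`-invariant conformal density with `δ > 0`, and
suppose `η ∈ ∂X` is a point mass for `μ` (i.e. `μ_o({η}) > 0`). Then for every `x ∈ X` and every
`γ` in the stabilizer of `η` in `Γ`, one has `B_η(x, γx) = 0`. -/
theorem busemann_zero_of_point_mass {X Bd Γ : Type*} [MetricSpace X] [MeasurableSpace Bd]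
    [Group Γ] [MulAction Γ X] [MulAction Γ Bd]
    (δ : ℝ) (hδ : 0 < δ) (o : X)
    (busem : Bd → X → X → ℝ)
    (hcocycle : ∀ (ξ : Bd) (x y z : X), busem ξ x z = busem ξ x y + busem ξ y z)
    (hbequiv : ∀ (γ : Γ) (ξ : Bd) (x y : X), busem (γ • ξ) (γ • x) (γ • y) = busem ξ x y)
    (μ : X → Measure Bd)
    (hconf : ∀ (x : X) (η' : Bd),
      μ x {η'} = ENNReal.ofReal (Real.exp (δ * busem η' o x)) * μ o {η'})
    (hequiv : ∀ (γ : Γ) (x : X) (η' : Bd), μ (γ • x) {γ • η'} = μ x {η'})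
    (η : Bd) (hatom : 0 < μ o {η}) (hfin : μ o {η} < ⊤)
    (x : X) (γ : Γ) (hγ : γ • η = η) :
    busem η x (γ • x) = 0 := by
  have hzero : ∀ y : X, busem η y y = 0 := by
    intro y
    have := hcocycle η y y y
    linarith
  have hinv : busem η x o = - busem η o x := by
    have := hcocycle η x o x
    have h0 := hzero x
    linarith
  have hmu : μ (γ • x) {η} = μ x {η} := by
    have := hequiv γ x η
    rwa [hγ] at this
  have key : ENNReal.ofReal (Real.exp (δ * busem η o (γ • x))) * μ o {η}
      = ENNReal.ofReal (Real.exp (δ * busem η o x)) * μ o {η} := by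
    rw [← hconf (γ • x) η, ← hconf x η, hmu]
  have hcancel : ENNReal.ofReal (Real.exp (δ * busem η o (γ • x)))
      = ENNReal.ofReal (Real.exp (δ * busem η o x)) :=
    (ENNReal.mul_left_inj hatom.ne' hfin.ne).mp key
  rw [ENNReal.ofReal_eq_ofReal_iff (Real.exp_nonneg _) (Real.exp_nonneg _)] at hcancel
  have hB : busem η o (γ • x) = busem η o x := by
    have := Real.exp_injective hcancel
    have := mul_left_cancel₀ hδ.ne' this
    linarith
  have := hcocycle η x o (γ • x)
  rw [hB, hinv] at this
  linarith
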